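/- The function f(x, t) = x·t·(2^(L/(x·t)) − 1) defined for x > 0, t > 0 is convex on (0,∞)², for any fixed L > 0. -/

import Mathlib

open Real Set

private lemma combo_pos {x y θ : ℝ} (hx : 0 < x) (hy : 0 < y) (h0 : 0 ≤ θ) (h1 : θ ≤ 1) :
    0 < x + θ * (y - x) := by
  rcases eq_or_lt_of_le h0 with h | h
  · simp [← h]; linarith
  · nlinarith [mul_pos h hy, mul_nonneg (sub_nonneg.2 h1) hx.le]

private lemma stmt1_key1 (s : ℝ) : Real.exp s * (1 - s) ≤ 1 := by
  have h1 := Real.add_one_le_exp (-s)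
  have h2 : Real.exp s * Real.exp (-s) = 1 := by
    rw [← Real.exp_add]; simp
  nlinarith [Real.exp_pos s]

private lemma stmt1_key2 (s : ℝ) (hs : 0 ≤ s) : 1 ≤ Real.exp s * (2 * s ^ 2 - s + 1) := by
  have h1 := Real.add_one_le_exp s
  have hq : 0 ≤ 2 * s ^ 2 - s + 1 := by nlinarith [sq_nonneg (4 * s - 1)]
  nlinarith [Real.exp_pos s, mul_le_mul_of_nonneg_right h1 hq]

private noncomputable def UU (p₁ p₂ d₁ d₂ θ : ℝ) : ℝ := (p₁ + θ * d₁) * (p₂ + θ * d₂)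

private noncomputable def VV (p₁ p₂ d₁ d₂ θ : ℝ) : ℝ := d₁ * (p₂ + θ * d₂) + (p₁ + θ * d₁) * d₂

private noncomputable def PSI (c p₁ p₂ d₁ d₂ θ : ℝ) : ℝ :=
  UU p₁ p₂ d₁ d₂ θ * Real.exp (c / UU p₁ p₂ d₁ d₂ θ) - UU p₁ p₂ d₁ d₂ θ

private noncomputable def DD1 (c p₁ p₂ d₁ d₂ θ : ℝ) : ℝ :=
  VV p₁ p₂ d₁ d₂ θ * (Real.exp (c / UU p₁ p₂ d₁ d₂ θ) * (1 - c / UU p₁ p₂ d₁ d₂ θ) - 1)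

private noncomputable def DD2 (c p₁ p₂ d₁ d₂ θ : ℝ) : ℝ :=
  (2 * (d₁ * d₂) * (Real.exp (c / UU p₁ p₂ d₁ d₂ θ) * (1 - c / UU p₁ p₂ d₁ d₂ θ) - 1)
      * UU p₁ p₂ d₁ d₂ θ
    + VV p₁ p₂ d₁ d₂ θ ^ 2 * (c / UU p₁ p₂ d₁ d₂ θ) ^ 2 * Real.exp (c / UU p₁ p₂ d₁ d₂ θ))
    / UU p₁ p₂ d₁ d₂ θ

private lemma hasDerivAt_UU (p₁ p₂ d₁ d₂ θ : ℝ) :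
    HasDerivAt (UU p₁ p₂ d₁ d₂) (VV p₁ p₂ d₁ d₂ θ) θ := by
  have h1 : HasDerivAt (fun θ : ℝ => p₁ + θ * d₁) d₁ θ := by
    simpa using ((hasDerivAt_id θ).mul_const d₁).const_add p₁
  have h2 : HasDerivAt (fun θ : ℝ => p₂ + θ * d₂) d₂ θ := by
    simpa using ((hasDerivAt_id θ).mul_const d₂).const_add p₂
  exact h1.mul h2

private lemma hasDerivAt_PSI (c p₁ p₂ d₁ d₂ θ : ℝ) (hne : UU p₁ p₂ d₁ d₂ θ ≠ 0) :
    HasDerivAt (fun θ => PSI c p₁ p₂ d₁ d₂ θ) (DD1 c p₁ p₂ d₁ d₂ θ) θ := by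
  have hU := hasDerivAt_UU p₁ p₂ d₁ d₂ θ
  have hq : HasDerivAt (fun θ => c / UU p₁ p₂ d₁ d₂ θ)
      ((0 * UU p₁ p₂ d₁ d₂ θ - c * VV p₁ p₂ d₁ d₂ θ) / UU p₁ p₂ d₁ d₂ θ ^ 2) θ :=
    (hasDerivAt_const θ c).div hU hne
  have h := (hU.mul hq.exp).sub hU
  have heq : DD1 c p₁ p₂ d₁ d₂ θ =
      VV p₁ p₂ d₁ d₂ θ * Real.exp (c / UU p₁ p₂ d₁ d₂ θ)
        + UU p₁ p₂ d₁ d₂ θ * (Real.exp (c / UU p₁ p₂ d₁ d₂ θ)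
            * ((0 * UU p₁ p₂ d₁ d₂ θ - c * VV p₁ p₂ d₁ d₂ θ) / UU p₁ p₂ d₁ d₂ θ ^ 2))
        - VV p₁ p₂ d₁ d₂ θ := by
    unfold DD1
    field_simp
    ring
  rw [heq]
  exact h

private lemma hasDerivAt_DD1 (c p₁ p₂ d₁ d₂ θ : ℝ) (hne : UU p₁ p₂ d₁ d₂ θ ≠ 0) :
    HasDerivAt (fun θ => DD1 c p₁ p₂ d₁ d₂ θ) (DD2 c p₁ p₂ d₁ d₂ θ) θ := by
  have hU := hasDerivAt_UU p₁ p₂ d₁ d₂ θ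
  have hq : HasDerivAt (fun θ => c / UU p₁ p₂ d₁ d₂ θ)
      ((0 * UU p₁ p₂ d₁ d₂ θ - c * VV p₁ p₂ d₁ d₂ θ) / UU p₁ p₂ d₁ d₂ θ ^ 2) θ :=
    (hasDerivAt_const θ c).div hU hne
  have hVd : HasDerivAt (fun θ => VV p₁ p₂ d₁ d₂ θ) (2 * (d₁ * d₂)) θ := by
    have h1 : HasDerivAt (fun θ : ℝ => d₁ * (p₂ + θ * d₂)) (d₁ * d₂) θ := by
      simpa using (((hasDerivAt_id θ).mul_const d₂).const_add p₂).const_mul d₁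
    have h2 : HasDerivAt (fun θ : ℝ => (p₁ + θ * d₁) * d₂) (d₁ * d₂) θ := by
      have := (((hasDerivAt_id θ).mul_const d₁).const_add p₁).mul_const d₂
      simpa [mul_comm] using this
    have h3 : (2 : ℝ) * (d₁ * d₂) = d₁ * d₂ + d₁ * d₂ := by ring
    rw [h3]
    exact h1.add h2
  have hsub := (hq.exp.mul (hq.const_sub 1)).sub_const 1
  have h := hVd.mul hsub
  have heq : DD2 c p₁ p₂ d₁ d₂ θ =
      2 * (d₁ * d₂) * (Real.exp (c / UU p₁ p₂ d₁ d₂ θ) * (1 - c / UU p₁ p₂ d₁ d₂ θ) - 1)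
        + VV p₁ p₂ d₁ d₂ θ *
          (Real.exp (c / UU p₁ p₂ d₁ d₂ θ)
              * ((0 * UU p₁ p₂ d₁ d₂ θ - c * VV p₁ p₂ d₁ d₂ θ) / UU p₁ p₂ d₁ d₂ θ ^ 2)
              * (1 - c / UU p₁ p₂ d₁ d₂ θ)
            + Real.exp (c / UU p₁ p₂ d₁ d₂ θ)
              * -((0 * UU p₁ p₂ d₁ d₂ θ - c * VV p₁ p₂ d₁ d₂ θ) / UU p₁ p₂ d₁ d₂ θ ^ 2)) := by
    unfold DD2
    field_simp
    ring
  rw [heq]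
  exact h

private lemma DD2_nonneg (c p₁ p₂ d₁ d₂ θ : ℝ) (hc : 0 < c) (hU : 0 < UU p₁ p₂ d₁ d₂ θ) :
    0 ≤ DD2 c p₁ p₂ d₁ d₂ θ := by
  have hVU : VV p₁ p₂ d₁ d₂ θ ^ 2 =
      4 * (d₁ * d₂) * UU p₁ p₂ d₁ d₂ θ + ((p₁ + θ * d₁) * d₂ - (p₂ + θ * d₂) * d₁) ^ 2 := by
    unfold UU VV; ring
  unfold DD2
  apply div_nonneg _ hU.le
  set s := c / UU p₁ p₂ d₁ d₂ θ with hs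
  have hspos : 0 < s := div_pos hc hU
  have hEpos : 0 < Real.exp s := Real.exp_pos s
  set E := Real.exp s with hE
  set V := VV p₁ p₂ d₁ d₂ θ with hVe
  set U := UU p₁ p₂ d₁ d₂ θ with hUe
  set W := (p₁ + θ * d₁) * d₂ - (p₂ + θ * d₂) * d₁ with hW
  have k1 : E * (1 - s) ≤ 1 := stmt1_key1 s
  have k2 : 1 ≤ E * (2 * s ^ 2 - s + 1) := stmt1_key2 s hspos.le
  have hV2 : V ^ 2 * s ^ 2 * E = 4 * (d₁ * d₂) * U * s ^ 2 * E + W ^ 2 * s ^ 2 * E := by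
    rw [hVU]; ring
  have hWnn : 0 ≤ W ^ 2 * s ^ 2 * E :=
    mul_nonneg (mul_nonneg (sq_nonneg W) (sq_nonneg s)) hEpos.le
  rcases le_or_gt (d₁ * d₂) 0 with hK | hK
  · have hp2 : 0 ≤ d₁ * d₂ * (E * (1 - s) - 1) := by nlinarith [hK, k1]
    have h1 : 0 ≤ 2 * (d₁ * d₂) * (E * (1 - s) - 1) * U := by
      nlinarith [mul_nonneg hp2 hU.le]
    have h2 : 0 ≤ V ^ 2 * s ^ 2 * E :=
      mul_nonneg (mul_nonneg (sq_nonneg V) (sq_nonneg s)) hEpos.le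
    linarith
  · have k2' : 0 ≤ E * (1 - s) - 1 + 2 * s ^ 2 * E := by nlinarith [k2]
    have hA : 0 ≤ 2 * (d₁ * d₂) * U * (E * (1 - s) - 1 + 2 * s ^ 2 * E) :=
      mul_nonneg (by positivity) k2'
    nlinarith [hA, hWnn, hV2]

private lemma convexOn_PSI (c p₁ p₂ d₁ d₂ : ℝ) (hc : 0 < c)
    (hU : ∀ θ ∈ Icc (0 : ℝ) 1, 0 < UU p₁ p₂ d₁ d₂ θ) :
    ConvexOn ℝ (Icc (0 : ℝ) 1) (fun θ => PSI c p₁ p₂ d₁ d₂ θ) := by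
  have hUc : Continuous (fun θ => UU p₁ p₂ d₁ d₂ θ) := by unfold UU; fun_prop
  have hcont : ContinuousOn (fun θ => PSI c p₁ p₂ d₁ d₂ θ) (Icc (0 : ℝ) 1) := by
    unfold PSI
    apply ContinuousOn.sub _ hUc.continuousOn
    apply ContinuousOn.mul hUc.continuousOn
    exact Real.continuous_exp.comp_continuousOn
      (continuousOn_const.div hUc.continuousOn fun θ hθ => (hU θ hθ).ne')
  apply MonotoneOn.convexOn_of_deriv (convex_Icc 0 1) hcont
  · rw [interior_Icc]
    intro θ hθ
    exact (hasDerivAt_PSI c p₁ p₂ d₁ d₂ θ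
      (hU θ (Ioo_subset_Icc_self hθ)).ne').differentiableAt.differentiableWithinAt
  · rw [interior_Icc]
    have hmono : MonotoneOn (fun θ => DD1 c p₁ p₂ d₁ d₂ θ) (Ioo (0 : ℝ) 1) := by
      apply monotoneOn_of_deriv_nonneg (convex_Ioo 0 1)
      · intro θ hθ
        exact (hasDerivAt_DD1 c p₁ p₂ d₁ d₂ θ
          (hU θ (Ioo_subset_Icc_self hθ)).ne').continuousAt.continuousWithinAt
      · rw [interior_Ioo]
        intro θ hθ
        exact (hasDerivAt_DD1 c p₁ p₂ d₁ d₂ θ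
          (hU θ (Ioo_subset_Icc_self hθ)).ne').differentiableAt.differentiableWithinAt
      · rw [interior_Ioo]
        intro θ hθ
        rw [(hasDerivAt_DD1 c p₁ p₂ d₁ d₂ θ (hU θ (Ioo_subset_Icc_self hθ)).ne').deriv]
        exact DD2_nonneg c p₁ p₂ d₁ d₂ θ hc (hU θ (Ioo_subset_Icc_self hθ))
    intro x hx y hy hxy
    rw [(hasDerivAt_PSI c p₁ p₂ d₁ d₂ x (hU x (Ioo_subset_Icc_self hx)).ne').deriv,
      (hasDerivAt_PSI c p₁ p₂ d₁ d₂ y (hU y (Ioo_subset_Icc_self hy)).ne').deriv]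
    exact hmono hx hy hxy

/-- `f(x,t) = x·t·(2^(L/(x·t)) − 1)` is convex on (0,∞)², for fixed L > 0. -/
theorem stmt1 (L : ℝ) (hL : 0 < L) :
    ConvexOn ℝ (Set.Ioi (0 : ℝ) ×ˢ Set.Ioi (0 : ℝ))
      (fun p : ℝ × ℝ => p.1 * p.2 * ((2 : ℝ) ^ (L / (p.1 * p.2)) - 1)) := by
  have hc : 0 < L * Real.log 2 := mul_pos hL (Real.log_pos one_lt_two)
  refine ⟨(convex_Ioi (0 : ℝ)).prod (convex_Ioi (0 : ℝ)), ?_⟩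
  rintro p ⟨hp1, hp2⟩ q ⟨hq1, hq2⟩ a b ha hb hab
  rw [Set.mem_Ioi] at hp1 hp2 hq1 hq2
  have hUpos : ∀ θ ∈ Icc (0 : ℝ) 1, 0 < UU p.1 p.2 (q.1 - p.1) (q.2 - p.2) θ := by
    rintro θ ⟨h0, h1⟩
    unfold UU
    have hA : 0 < p.1 + θ * (q.1 - p.1) := combo_pos hp1 hq1 h0 h1
    have hB : 0 < p.2 + θ * (q.2 - p.2) := combo_pos hp2 hq2 h0 h1
    exact mul_pos hA hB
  have hconv := convexOn_PSI (L * Real.log 2) p.1 p.2 (q.1 - p.1) (q.2 - p.2) hc hUpos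
  have key := hconv.2 (left_mem_Icc.2 (zero_le_one)) (right_mem_Icc.2 (zero_le_one)) ha hb hab
  simp only [smul_eq_mul, mul_zero, mul_one, zero_add] at key
  -- rewrite the target in exponential form
  have ef : ∀ x y : ℝ, x * y * ((2 : ℝ) ^ (L / (x * y)) - 1) =
      x * y * Real.exp ((L * Real.log 2) / (x * y)) - x * y := by
    intro x y
    rw [Real.rpow_def_of_pos (by norm_num : (0 : ℝ) < 2),
      show Real.log 2 * (L / (x * y)) = (L * Real.log 2) / (x * y) by ring]
    ring
  have haa : a = 1 - b := by linarith
  have hfst : (a • p + b • q).1 = a * p.1 + b * q.1 := by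
    simp [Prod.smul_fst, Prod.fst_add, smul_eq_mul]
  have hsnd : (a • p + b • q).2 = a * p.2 + b * q.2 := by
    simp [Prod.smul_snd, Prod.snd_add, smul_eq_mul]
  have e0 : PSI (L * Real.log 2) p.1 p.2 (q.1 - p.1) (q.2 - p.2) 0 =
      p.1 * p.2 * Real.exp ((L * Real.log 2) / (p.1 * p.2)) - p.1 * p.2 := by
    unfold PSI UU; norm_num
  have e1 : PSI (L * Real.log 2) p.1 p.2 (q.1 - p.1) (q.2 - p.2) 1 =
      q.1 * q.2 * Real.exp ((L * Real.log 2) / (q.1 * q.2)) - q.1 * q.2 := by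
    unfold PSI UU
    rw [show p.1 + 1 * (q.1 - p.1) = q.1 by ring, show p.2 + 1 * (q.2 - p.2) = q.2 by ring]
  have eb : PSI (L * Real.log 2) p.1 p.2 (q.1 - p.1) (q.2 - p.2) b =
      (a * p.1 + b * q.1) * (a * p.2 + b * q.2)
        * Real.exp ((L * Real.log 2) / ((a * p.1 + b * q.1) * (a * p.2 + b * q.2)))
        - (a * p.1 + b * q.1) * (a * p.2 + b * q.2) := by
    unfold PSI UU
    rw [show p.1 + b * (q.1 - p.1) = a * p.1 + b * q.1 by rw [haa]; ring,
      show p.2 + b * (q.2 - p.2) = a * p.2 + b * q.2 by rw [haa]; ring]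
  simp only [hfst, hsnd, ef, smul_eq_mul]
  rw [e0, e1, eb] at key
  linarith
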